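/- The family {R^{(n,m)}} satisfies the hexagon (quasi-triangularity) relation (φ_{n,m} ⊗ id_l)(R^{(nm,l)}) = R^{(n,l)}_{13} R^{(m,l)}_{23} in M_n(ℂ) ⊗ M_m(ℂ) ⊗ M_l(ℂ), for all positive integers n, m, l. -/

import Mathlib

/-- The index map `(i,j) ↦ m·i + j : Fin n × Fin m → Fin (n*m)` (0-based form of
`(i,j) ↦ m(i-1)+j`); its inverse is `k ↦ (k div m, k mod m)`. -/
def pairIdx {n m : ℕ} (i : Fin n) (j : Fin m) : Fin (n * m) :=
  ⟨m * (i : ℕ) + (j : ℕ), by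
    have hi : (i : ℕ) + 1 ≤ n := i.2
    have hj : (j : ℕ) < m := j.2
    have h1 : m * (i : ℕ) + (j : ℕ) < m * ((i : ℕ) + 1) := by
      rw [Nat.mul_succ]; omega
    have h2 : m * ((i : ℕ) + 1) ≤ m * n := Nat.mul_le_mul le_rfl hi
    have h3 : m * n = n * m := Nat.mul_comm m n
    omega⟩


/-- `φ : M_{nm}(ℂ) → M_n(ℂ) ⊗ M_m(ℂ)` (Kronecker model `Matrix (Fin n × Fin m)`)
is the matrix-unit isomorphism `φ_{n,m}` iff
`φ(E^{(nm)}_{m(i-1)+j, m(i'-1)+j'}) = E^{(n)}_{i,i'} ⊗ E^{(m)}_{j,j'}`. -/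
def IsMatrixUnitHom (n m : ℕ)
    (φ : Matrix (Fin (n * m)) (Fin (n * m)) ℂ →⋆ₐ[ℂ]
      Matrix (Fin n × Fin m) (Fin n × Fin m) ℂ) : Prop :=
  ∀ (i i' : Fin n) (j j' : Fin m),
    φ (Matrix.single (pairIdx i j) (pairIdx i' j') 1) =
      Matrix.single (i, j) (i', j') 1

/-- The permutation unitary `R^{(n,m)} ∈ M_n(ℂ) ⊗ M_m(ℂ)` (Kronecker model):
`R^{(n,m)} e_i ⊗ e_j = e_{i'} ⊗ e_{j'}` where `m·i + j = n·j' + i'` (0-based),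
i.e. the `(p,q)` entry is `1` iff `p = σ_{n,m}(q)`. -/
def Rmat (n m : ℕ) : Matrix (Fin n × Fin m) (Fin n × Fin m) ℂ :=
  fun p q => if m * (q.1 : ℕ) + (q.2 : ℕ) = n * (p.2 : ℕ) + (p.1 : ℕ) then 1 else 0

/-- `φ ⊗ id_α` in the Kronecker model. -/
def tensorId {α β γ : Type*} (φ : Matrix β β ℂ → Matrix γ γ ℂ)
    (M : Matrix (β × α) (β × α) ℂ) : Matrix (γ × α) (γ × α) ℂ :=
  fun p q => φ (fun b b' => M (b, p.2) (b', q.2)) p.1 q.1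

/-- The leg `R^{(n,l)}_{13}` in `M_n ⊗ M_m ⊗ M_l` (Kronecker model,
indices `(Fin n × Fin m) × Fin l`). -/
def R13 (n m l : ℕ) : Matrix ((Fin n × Fin m) × Fin l) ((Fin n × Fin m) × Fin l) ℂ :=
  fun p q => Rmat n l (p.1.1, p.2) (q.1.1, q.2) * (if p.1.2 = q.1.2 then 1 else 0)

/-- The leg `R^{(m,l)}_{23}` in `M_n ⊗ M_m ⊗ M_l`. -/
def R23 (n m l : ℕ) : Matrix ((Fin n × Fin m) × Fin l) ((Fin n × Fin m) × Fin l) ℂ :=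
  fun p q => Rmat m l (p.1.2, p.2) (q.1.2, q.2) * (if p.1.1 = q.1.1 then 1 else 0)

lemma pairIdx_finProd {n m : ℕ} (x : Fin n × Fin m) :
    finProdFinEquiv x = pairIdx x.1 x.2 := by
  apply Fin.ext
  simp [finProdFinEquiv, pairIdx]
  omega

lemma phi_apply {n m : ℕ}
    (φ : Matrix (Fin (n * m)) (Fin (n * m)) ℂ →⋆ₐ[ℂ]
      Matrix (Fin n × Fin m) (Fin n × Fin m) ℂ)
    (hφ : IsMatrixUnitHom n m φ)
    (M : Matrix (Fin (n * m)) (Fin (n * m)) ℂ) (p q : Fin n × Fin m) :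
    φ M p q = M (pairIdx p.1 p.2) (pairIdx q.1 q.2) := by
  have hM : M = ∑ p' : Fin n × Fin m, ∑ q' : Fin n × Fin m,
      M (pairIdx p'.1 p'.2) (pairIdx q'.1 q'.2) •
        Matrix.single (pairIdx p'.1 p'.2) (pairIdx q'.1 q'.2) (1 : ℂ) := by
    nth_rewrite 1 [Matrix.matrix_eq_sum_single M]
    rw [← Equiv.sum_comp (finProdFinEquiv (m := n) (n := m))
      (fun i => ∑ j : Fin (n * m), Matrix.single i j (M i j))]
    refine Finset.sum_congr rfl fun p' _ => ?_
    rw [← Equiv.sum_comp (finProdFinEquiv (m := n) (n := m))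
      (fun j => Matrix.single (finProdFinEquiv p') j (M (finProdFinEquiv p') j))]
    refine Finset.sum_congr rfl fun q' _ => ?_
    rw [pairIdx_finProd, pairIdx_finProd, Matrix.smul_single, smul_eq_mul, mul_one]
  have h2 : φ M = ∑ p' : Fin n × Fin m, ∑ q' : Fin n × Fin m,
      M (pairIdx p'.1 p'.2) (pairIdx q'.1 q'.2) •
        Matrix.single p' q' (1 : ℂ) := by
    conv_lhs => rw [hM]
    rw [map_sum]
    refine Finset.sum_congr rfl fun p' _ => ?_
    rw [map_sum]
    refine Finset.sum_congr rfl fun q' _ => ?_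
    rw [map_smul, hφ p'.1 q'.1 p'.2 q'.2]
  rw [h2]
  simp [Matrix.sum_apply, Matrix.single, Matrix.of_apply, ite_and,
    Finset.sum_ite_eq, Finset.sum_ite_eq']

/-- The first hexagon (quasi-triangularity) relation
`(φ_{n,m} ⊗ id_l)(R^{(nm,l)}) = R^{(n,l)}_{13} R^{(m,l)}_{23}`
in `M_n(ℂ) ⊗ M_m(ℂ) ⊗ M_l(ℂ)` (Kronecker model). -/
theorem Rmat_hexagon_one (n m l : ℕ) (hn : 0 < n) (hm : 0 < m) (hl : 0 < l)
    (φnm : Matrix (Fin (n * m)) (Fin (n * m)) ℂ →⋆ₐ[ℂ]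
      Matrix (Fin n × Fin m) (Fin n × Fin m) ℂ)
    (hφnm : IsMatrixUnitHom n m φnm) :
    tensorId (⇑φnm) (Rmat (n * m) l) = R13 n m l * R23 n m l := by
  ext ⟨⟨a, b⟩, c⟩ ⟨⟨a', b'⟩, c'⟩
  show (φnm fun s s' => Rmat (n * m) l (s, c) (s', c')) (a, b) (a', b') = _
  rw [phi_apply φnm hφnm (fun s s' => Rmat (n * m) l (s, c) (s', c')), Matrix.mul_apply]
  simp only [Rmat, pairIdx]
  show (if l * (m * (a' : ℕ) + (b' : ℕ)) + (c' : ℕ)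
      = n * m * (c : ℕ) + (m * (a : ℕ) + (b : ℕ)) then (1 : ℂ) else 0) = _
  by_cases h : l * (m * (a' : ℕ) + (b' : ℕ)) + (c' : ℕ)
      = n * m * (c : ℕ) + (m * (a : ℕ) + (b : ℕ))
  · rw [if_pos h]
    have e1 : m * (l * (a' : ℕ)) ≤ m * (n * (c : ℕ) + (a : ℕ)) + (b : ℕ) := by
      calc m * (l * (a' : ℕ)) = l * (m * (a' : ℕ)) := by ring
        _ ≤ l * (m * (a' : ℕ) + (b' : ℕ)) + (c' : ℕ) :=
          le_trans (Nat.mul_le_mul_left l (Nat.le_add_right _ _)) (Nat.le_add_right _ _)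
        _ = n * m * (c : ℕ) + (m * (a : ℕ) + (b : ℕ)) := h
        _ = m * (n * (c : ℕ) + (a : ℕ)) + (b : ℕ) := by ring
    have hle : l * (a' : ℕ) ≤ n * (c : ℕ) + (a : ℕ) := by
      have hb : (b : ℕ) < m := b.2
      have e2 : m * (l * (a' : ℕ)) < m * ((n * (c : ℕ) + (a : ℕ)) + 1) := by
        calc m * (l * (a' : ℕ)) ≤ m * (n * (c : ℕ) + (a : ℕ)) + (b : ℕ) := e1
          _ < m * (n * (c : ℕ) + (a : ℕ)) + m := by omega
          _ = m * ((n * (c : ℕ) + (a : ℕ)) + 1) := by ring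
      exact Nat.lt_succ_iff.mp (Nat.lt_of_mul_lt_mul_left e2)
    set z0 : ℕ := n * (c : ℕ) + (a : ℕ) - l * (a' : ℕ) with hz0def
    have hz0 : l * (a' : ℕ) + z0 = n * (c : ℕ) + (a : ℕ) := Nat.add_sub_cancel' hle
    have hz2 : l * (b' : ℕ) + (c' : ℕ) = m * z0 + (b : ℕ) := by
      have e3 : m * (l * (a' : ℕ)) + (l * (b' : ℕ) + (c' : ℕ))
          = m * (l * (a' : ℕ)) + (m * z0 + (b : ℕ)) := by
        calc m * (l * (a' : ℕ)) + (l * (b' : ℕ) + (c' : ℕ))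
            = l * (m * (a' : ℕ) + (b' : ℕ)) + (c' : ℕ) := by ring
          _ = n * m * (c : ℕ) + (m * (a : ℕ) + (b : ℕ)) := h
          _ = m * (n * (c : ℕ) + (a : ℕ)) + (b : ℕ) := by ring
          _ = m * (l * (a' : ℕ) + z0) + (b : ℕ) := by rw [hz0]
          _ = m * (l * (a' : ℕ)) + (m * z0 + (b : ℕ)) := by ring
      exact Nat.add_left_cancel e3
    have hz0l : z0 < l := by
      have hb' : (b' : ℕ) + 1 ≤ m := b'.2
      have e4 : m * z0 + (b : ℕ) < m * l := by
        calc m * z0 + (b : ℕ) = l * (b' : ℕ) + (c' : ℕ) := hz2.symm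
          _ < l * (b' : ℕ) + l := by have := c'.2; omega
          _ = l * ((b' : ℕ) + 1) := by ring
          _ ≤ l * m := Nat.mul_le_mul_left l hb'
          _ = m * l := Nat.mul_comm l m
      exact Nat.lt_of_mul_lt_mul_left (lt_of_le_of_lt (Nat.le_add_right _ _) e4)
    rw [Fintype.sum_eq_single (((a', b), (⟨z0, hz0l⟩ : Fin l)) : (Fin n × Fin m) × Fin l)]
    · simp only [R13, R23, Rmat]
      simp [hz0, hz2]
    · rintro ⟨⟨x, y⟩, z⟩ hne
      simp only [R13, R23, Rmat]
      by_cases h1 : l * (x : ℕ) + (z : ℕ) = n * (c : ℕ) + (a : ℕ)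
      · by_cases h2 : b = y
        · by_cases h4 : x = a'
          · exfalso
            apply hne
            subst h2
            subst h4
            have hz : (z : ℕ) = z0 := Nat.add_left_cancel (h1.trans hz0.symm)
            simp [Prod.ext_iff, Fin.ext_iff, hz]
          · simp [h4]
        · simp [h2]
      · simp [h1]
  · rw [if_neg h]
    symm
    apply Finset.sum_eq_zero
    rintro ⟨⟨x, y⟩, z⟩ -
    simp only [R13, R23, Rmat]
    by_cases h1 : l * (x : ℕ) + (z : ℕ) = n * (c : ℕ) + (a : ℕ)
    · by_cases h2 : b = y
      · by_cases h3 : l * (b' : ℕ) + (c' : ℕ) = m * (z : ℕ) + (y : ℕ)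
        · by_cases h4 : x = a'
          · exfalso
            apply h
            subst h2
            subst h4
            calc l * (m * (x : ℕ) + (b' : ℕ)) + (c' : ℕ)
                = m * (l * (x : ℕ)) + (l * (b' : ℕ) + (c' : ℕ)) := by ring
              _ = m * (l * (x : ℕ)) + (m * (z : ℕ) + (b : ℕ)) := by rw [h3]
              _ = m * (l * (x : ℕ) + (z : ℕ)) + (b : ℕ) := by ring
              _ = m * (n * (c : ℕ) + (a : ℕ)) + (b : ℕ) := by rw [h1]
              _ = n * m * (c : ℕ) + (m * (a : ℕ) + (b : ℕ)) := by ring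
          · simp [h4]
        · simp [h3]
      · simp [h2]
    · simp [h1]
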